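/- Let (E_n)_{n≥1} be a sequence of events in a probability space and S_n = Σ_{k=1}^n 1_{E_k}. Suppose there exists a summable sequence (ρ_n) of nonnegative reals such that for all i ≠ j, P(E_i ∩ E_j) − P(E_i)P(E_j) ≤ ρ_{|i−j|} √(P(E_i)P(E_j)), and suppose E[S_n] → ∞. Then S_n / E[S_n] → 1 almost surely. -/

import Mathlib

open MeasureTheory Filter Finset

namespace Stmt4Aux

lemma sqrt_le_half_add {a b : ℝ} (ha : 0 ≤ a) (hb : 0 ≤ b) :
    Real.sqrt (a * b) ≤ (a + b) / 2 := by
  have h : a * b ≤ ((a + b) / 2) ^ 2 := by nlinarith [sq_nonneg (a - b)]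
  calc Real.sqrt (a * b) ≤ Real.sqrt (((a + b) / 2) ^ 2) := Real.sqrt_le_sqrt h
    _ = (a + b) / 2 := Real.sqrt_sq (by linarith)

lemma rho_sum_le (ρ : ℕ → ℝ) (hρ0 : ∀ n, 0 ≤ ρ n) (hρsum : Summable ρ)
    (i : ℕ) (t : Finset ℕ) (hi : i ∉ t) :
    ∑ j ∈ t, ρ (Nat.dist i j) ≤ 2 * ∑' d, ρ d := by
  classical
  have hsplit := Finset.sum_filter_add_sum_filter_not t (fun j => j < i)
      (fun j => ρ (Nat.dist i j))
  have h1 : ∑ j ∈ t.filter (fun j => j < i), ρ (Nat.dist i j) ≤ ∑' d, ρ d := by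
    rw [Finset.sum_congr rfl (fun j hj => by
      rw [Nat.dist_comm, Nat.dist_eq_sub_of_le (le_of_lt (Finset.mem_filter.1 hj).2)])]
    have hinj : ∀ x ∈ t.filter (fun j => j < i), ∀ y ∈ t.filter (fun j => j < i),
        i - x = i - y → x = y := by
      intro x hx y hy hxy
      have hx' := (Finset.mem_filter.1 hx).2
      have hy' := (Finset.mem_filter.1 hy).2
      omega
    calc ∑ j ∈ t.filter (fun j => j < i), ρ (i - j)
        = ∑ d ∈ (t.filter (fun j => j < i)).image (fun j => i - j), ρ d :=
          (Finset.sum_image hinj).symm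
      _ ≤ ∑' d, ρ d := Summable.sum_le_tsum _ (fun d _ => hρ0 d) hρsum
  have h2 : ∑ j ∈ t.filter (fun j => ¬ j < i), ρ (Nat.dist i j) ≤ ∑' d, ρ d := by
    rw [Finset.sum_congr rfl (fun j hj => by
      have hj1 := (Finset.mem_filter.1 hj).1
      have hj2 := (Finset.mem_filter.1 hj).2
      have : i ≤ j := by omega
      rw [Nat.dist_eq_sub_of_le this])]
    have hinj : ∀ x ∈ t.filter (fun j => ¬ j < i), ∀ y ∈ t.filter (fun j => ¬ j < i),
        x - i = y - i → x = y := by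
      intro x hx y hy hxy
      have hx' := (Finset.mem_filter.1 hx).2
      have hy' := (Finset.mem_filter.1 hy).2
      omega
    calc ∑ j ∈ t.filter (fun j => ¬ j < i), ρ (j - i)
        = ∑ d ∈ (t.filter (fun j => ¬ j < i)).image (fun j => j - i), ρ d :=
          (Finset.sum_image hinj).symm
      _ ≤ ∑' d, ρ d := Summable.sum_le_tsum _ (fun d _ => hρ0 d) hρsum
  linarith

end Stmt4Aux

namespace Stmt4Aux2
open Stmt4Aux

variable {Ω : Type*} [MeasurableSpace Ω] {μ : Measure Ω} [IsProbabilityMeasure μ]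

lemma ind_integrable {A : Set Ω} (hA : MeasurableSet A) :
    Integrable (fun ω => A.indicator (fun _ => (1:ℝ)) ω) μ :=
  (integrable_const (1:ℝ)).indicator hA

lemma ind_mul {A B : Set Ω} (ω : Ω) :
    A.indicator (fun _ => (1:ℝ)) ω * B.indicator (fun _ => (1:ℝ)) ω
      = (A ∩ B).indicator (fun _ => (1:ℝ)) ω := by
  classical
  by_cases hA : ω ∈ A <;> by_cases hB : ω ∈ B <;>
    simp [Set.indicator_apply, hA, hB, Set.mem_inter_iff]

lemma cov_fun_eq {A B : Set Ω} (a b : ℝ) (ω : Ω) :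
    (A.indicator (fun _ => (1:ℝ)) ω - a) * (B.indicator (fun _ => (1:ℝ)) ω - b)
      = (A ∩ B).indicator (fun _ => (1:ℝ)) ω
        - b * A.indicator (fun _ => (1:ℝ)) ω - a * B.indicator (fun _ => (1:ℝ)) ω + a * b := by
  rw [← ind_mul]; ring

lemma cov_integrable {A B : Set Ω} (hA : MeasurableSet A) (hB : MeasurableSet B) (a b : ℝ) :
    Integrable (fun ω =>
      (A.indicator (fun _ => (1:ℝ)) ω - a) * (B.indicator (fun _ => (1:ℝ)) ω - b)) μ := by
  have : (fun ω =>
      (A.indicator (fun _ => (1:ℝ)) ω - a) * (B.indicator (fun _ => (1:ℝ)) ω - b))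
      = fun ω => (A ∩ B).indicator (fun _ => (1:ℝ)) ω
        - b * A.indicator (fun _ => (1:ℝ)) ω - a * B.indicator (fun _ => (1:ℝ)) ω + a * b := by
    funext ω; exact cov_fun_eq a b ω
  rw [this]
  exact ((((ind_integrable (hA.inter hB)).sub
    ((ind_integrable hA).const_mul b)).sub
    ((ind_integrable hB).const_mul a)).add (integrable_const (a*b)))

lemma integral_ind {A : Set Ω} (hA : MeasurableSet A) :
    ∫ ω, A.indicator (fun _ => (1:ℝ)) ω ∂μ = (μ A).toReal := by
  exact integral_indicator_one (μ := μ) hA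

lemma cov_integral {A B : Set Ω} (hA : MeasurableSet A) (hB : MeasurableSet B) :
    ∫ ω, (A.indicator (fun _ => (1:ℝ)) ω - (μ A).toReal)
        * (B.indicator (fun _ => (1:ℝ)) ω - (μ B).toReal) ∂μ
      = (μ (A ∩ B)).toReal - (μ A).toReal * (μ B).toReal := by
  set a := (μ A).toReal
  set b := (μ B).toReal
  have h1 : ∫ ω, (A.indicator (fun _ => (1:ℝ)) ω - a) * (B.indicator (fun _ => (1:ℝ)) ω - b) ∂μ
      = ∫ ω, ((A ∩ B).indicator (fun _ => (1:ℝ)) ω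
        - b * A.indicator (fun _ => (1:ℝ)) ω - a * B.indicator (fun _ => (1:ℝ)) ω + a * b) ∂μ := by
    congr 1; funext ω; exact cov_fun_eq a b ω
  rw [h1, integral_add, integral_sub, integral_sub, integral_const_mul, integral_const_mul,
    integral_ind (hA.inter hB), integral_ind hA, integral_ind hB, integral_const]
  · simp [measure_univ]; ring
  · exact ind_integrable (hA.inter hB)
  · exact (ind_integrable hA).const_mul b
  · exact ((ind_integrable (hA.inter hB)).sub ((ind_integrable hA).const_mul b))
  · exact (ind_integrable hB).const_mul a
  · exact (((ind_integrable (hA.inter hB)).sub ((ind_integrable hA).const_mul b)).sub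
      ((ind_integrable hB).const_mul a))
  · exact integrable_const _

end Stmt4Aux2

namespace Stmt4Aux3
open Stmt4Aux Stmt4Aux2

variable {Ω : Type*} [MeasurableSpace Ω] {μ : Measure Ω} [IsProbabilityMeasure μ]

lemma var_bound (E : ℕ → Set Ω) (hE : ∀ n, MeasurableSet (E n))
    (ρ : ℕ → ℝ) (hρ0 : ∀ n, 0 ≤ ρ n) (hρsum : Summable ρ)
    (hcorr : ∀ i j, 1 ≤ i → 1 ≤ j → i ≠ j →
      (μ (E i ∩ E j)).toReal - (μ (E i)).toReal * (μ (E j)).toReal ≤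
        ρ (Nat.dist i j) * Real.sqrt ((μ (E i)).toReal * (μ (E j)).toReal)) (n : ℕ) :
    ∫ ω, (∑ k ∈ Icc 1 n, ((E k).indicator (fun _ => (1:ℝ)) ω - (μ (E k)).toReal))^2 ∂μ
      ≤ (1 + 2 * ∑' d, ρ d) * ∑ k ∈ Icc 1 n, (μ (E k)).toReal := by
  classical
  set T := ∑' d, ρ d with hT
  have hp0 : ∀ k, (0:ℝ) ≤ (μ (E k)).toReal := fun k => ENNReal.toReal_nonneg
  have hT0 : 0 ≤ T := tsum_nonneg hρ0
  have hsq : ∀ ω : Ω, (∑ k ∈ Icc 1 n, ((E k).indicator (fun _ => (1:ℝ)) ω - (μ (E k)).toReal))^2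
      = ∑ i ∈ Icc 1 n, ∑ j ∈ Icc 1 n,
        (((E i).indicator (fun _ => (1:ℝ)) ω - (μ (E i)).toReal) *
         ((E j).indicator (fun _ => (1:ℝ)) ω - (μ (E j)).toReal)) := by
    intro ω; rw [sq, Finset.sum_mul_sum]
  have heq : ∫ ω, (∑ k ∈ Icc 1 n, ((E k).indicator (fun _ => (1:ℝ)) ω - (μ (E k)).toReal))^2 ∂μ
      = ∑ i ∈ Icc 1 n, ∑ j ∈ Icc 1 n,
        ((μ (E i ∩ E j)).toReal - (μ (E i)).toReal * (μ (E j)).toReal) := by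
    simp only [hsq]
    rw [integral_finset_sum _ (fun i _ =>
      integrable_finset_sum _ (fun j _ => cov_integrable (hE i) (hE j) _ _))]
    refine Finset.sum_congr rfl (fun i _ => ?_)
    rw [integral_finset_sum _ (fun j _ => cov_integrable (hE i) (hE j) _ _)]
    exact Finset.sum_congr rfl (fun j _ => cov_integral (hE i) (hE j))
  rw [heq]
  have hrow : ∀ i ∈ Icc 1 n,
      ∑ j ∈ Icc 1 n, ((μ (E i ∩ E j)).toReal - (μ (E i)).toReal * (μ (E j)).toReal)
        ≤ (μ (E i)).toReal * (1 + T)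
          + (1/2) * ∑ j ∈ (Icc 1 n).erase i, ρ (Nat.dist i j) * (μ (E j)).toReal := by
    intro i hi
    rw [← Finset.add_sum_erase _ _ hi]
    have hdiag : (μ (E i ∩ E i)).toReal - (μ (E i)).toReal * (μ (E i)).toReal
        ≤ (μ (E i)).toReal := by
      rw [Set.inter_self]
      nlinarith [hp0 i]
    have hoff : ∑ j ∈ (Icc 1 n).erase i,
        ((μ (E i ∩ E j)).toReal - (μ (E i)).toReal * (μ (E j)).toReal)
        ≤ ∑ j ∈ (Icc 1 n).erase i,
          (ρ (Nat.dist i j) * (μ (E i)).toReal / 2 + ρ (Nat.dist i j) * (μ (E j)).toReal / 2) := by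
      refine Finset.sum_le_sum (fun j hj => ?_)
      have hji : j ≠ i := (Finset.mem_erase.1 hj).1
      have hjm := Finset.mem_Icc.1 (Finset.mem_erase.1 hj).2
      have him := Finset.mem_Icc.1 hi
      have h1 := hcorr i j him.1 hjm.1 (Ne.symm hji)
      have h2 : Real.sqrt ((μ (E i)).toReal * (μ (E j)).toReal)
          ≤ ((μ (E i)).toReal + (μ (E j)).toReal) / 2 := sqrt_le_half_add (hp0 i) (hp0 j)
      have h3 : ρ (Nat.dist i j) * Real.sqrt ((μ (E i)).toReal * (μ (E j)).toReal)
          ≤ ρ (Nat.dist i j) * (((μ (E i)).toReal + (μ (E j)).toReal) / 2) :=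
        mul_le_mul_of_nonneg_left h2 (hρ0 _)
      calc (μ (E i ∩ E j)).toReal - (μ (E i)).toReal * (μ (E j)).toReal
          ≤ ρ (Nat.dist i j) * (((μ (E i)).toReal + (μ (E j)).toReal) / 2) := h1.trans h3
        _ = ρ (Nat.dist i j) * (μ (E i)).toReal / 2 + ρ (Nat.dist i j) * (μ (E j)).toReal / 2 := by
            ring
    have hrho : ∑ j ∈ (Icc 1 n).erase i, ρ (Nat.dist i j) ≤ 2 * T :=
      rho_sum_le ρ hρ0 hρsum i _ (Finset.notMem_erase i _)
    have hsum1 : ∑ j ∈ (Icc 1 n).erase i, ρ (Nat.dist i j) * (μ (E i)).toReal / 2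
        = (μ (E i)).toReal / 2 * ∑ j ∈ (Icc 1 n).erase i, ρ (Nat.dist i j) := by
      rw [Finset.mul_sum]; exact Finset.sum_congr rfl (fun j _ => by ring)
    have hsum2 : (μ (E i)).toReal / 2 * ∑ j ∈ (Icc 1 n).erase i, ρ (Nat.dist i j)
        ≤ (μ (E i)).toReal / 2 * (2 * T) :=
      mul_le_mul_of_nonneg_left hrho (by positivity)
    rw [Finset.sum_add_distrib] at hoff
    have := hsum1 ▸ hsum2
    have hhalf : ∑ j ∈ (Icc 1 n).erase i, ρ (Nat.dist i j) * (μ (E j)).toReal / 2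
        = (1/2) * ∑ j ∈ (Icc 1 n).erase i, ρ (Nat.dist i j) * (μ (E j)).toReal := by
      rw [Finset.mul_sum]; exact Finset.sum_congr rfl (fun j _ => by ring)
    rw [hhalf] at hoff
    nlinarith [hoff, hdiag]
  have htot := Finset.sum_le_sum hrow
  have hD : ∑ i ∈ Icc 1 n, ∑ j ∈ (Icc 1 n).erase i, ρ (Nat.dist i j) * (μ (E j)).toReal
      ≤ 2 * T * ∑ k ∈ Icc 1 n, (μ (E k)).toReal := by
    have hswap : ∑ i ∈ Icc 1 n, ∑ j ∈ (Icc 1 n).erase i, ρ (Nat.dist i j) * (μ (E j)).toReal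
        = ∑ j ∈ Icc 1 n, ∑ i ∈ (Icc 1 n).erase j, ρ (Nat.dist i j) * (μ (E j)).toReal := by
      refine Finset.sum_comm' (fun x y => ?_)
      simp only [Finset.mem_erase, Finset.mem_Icc]
      omega
    rw [hswap]
    calc ∑ j ∈ Icc 1 n, ∑ i ∈ (Icc 1 n).erase j, ρ (Nat.dist i j) * (μ (E j)).toReal
        ≤ ∑ j ∈ Icc 1 n, 2 * T * (μ (E j)).toReal := by
          refine Finset.sum_le_sum (fun j hj => ?_)
          have h1 : ∑ i ∈ (Icc 1 n).erase j, ρ (Nat.dist i j) * (μ (E j)).toReal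
              = (∑ i ∈ (Icc 1 n).erase j, ρ (Nat.dist j i)) * (μ (E j)).toReal := by
            rw [Finset.sum_mul]
            exact Finset.sum_congr rfl (fun i _ => by rw [Nat.dist_comm])
          rw [h1]
          exact mul_le_mul_of_nonneg_right
            (rho_sum_le ρ hρ0 hρsum j _ (Finset.notMem_erase j _)) (hp0 j)
      _ = 2 * T * ∑ k ∈ Icc 1 n, (μ (E k)).toReal := by rw [← Finset.mul_sum]
  rw [Finset.sum_add_distrib, ← Finset.sum_mul, ← Finset.mul_sum] at htot
  nlinarith [htot, hD]

end Stmt4Aux3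

namespace Stmt4Main
open Stmt4Aux Stmt4Aux2 Stmt4Aux3

variable {Ω : Type*} [MeasurableSpace Ω]

noncomputable def mS (μ : Measure Ω) (E : ℕ → Set Ω) (n : ℕ) : ℝ :=
  ∑ k ∈ Icc 1 n, (μ (E k)).toReal

noncomputable def SS (E : ℕ → Set Ω) (n : ℕ) (ω : Ω) : ℝ :=
  ∑ k ∈ Icc 1 n, (E k).indicator (fun _ => (1:ℝ)) ω

variable {μ : Measure Ω} [IsProbabilityMeasure μ]

lemma sub_eq (E : ℕ → Set Ω) (n : ℕ) (ω : Ω) :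
    SS E n ω - mS μ E n
      = ∑ k ∈ Icc 1 n, ((E k).indicator (fun _ => (1:ℝ)) ω - (μ (E k)).toReal) := by
  rw [SS, mS, Finset.sum_sub_distrib]

lemma sq_integrable (E : ℕ → Set Ω) (hE : ∀ n, MeasurableSet (E n)) (n : ℕ) :
    Integrable (fun ω => (SS E n ω - mS μ E n)^2) μ := by
  have h : (fun ω => (SS E n ω - mS μ E n)^2)
      = fun ω => ∑ i ∈ Icc 1 n, ∑ j ∈ Icc 1 n,
        (((E i).indicator (fun _ => (1:ℝ)) ω - (μ (E i)).toReal) *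
         ((E j).indicator (fun _ => (1:ℝ)) ω - (μ (E j)).toReal)) := by
    funext ω; rw [sub_eq, sq, Finset.sum_mul_sum]
  rw [h]
  exact integrable_finset_sum _ (fun i _ =>
    integrable_finset_sum _ (fun j _ => cov_integrable (hE i) (hE j) _ _))

lemma cheb (E : ℕ → Set Ω) (hE : ∀ n, MeasurableSet (E n))
    (n : ℕ) (a V : ℝ) (ha : 0 < a)
    (hV : ∫ ω, (SS E n ω - mS μ E n)^2 ∂μ ≤ V) :
    μ {ω | a ≤ (SS E n ω - mS μ E n)^2} ≤ ENNReal.ofReal (V / a) := by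
  have hmark := mul_meas_ge_le_integral_of_nonneg
    (ae_of_all μ (fun ω => sq_nonneg (SS E n ω - mS μ E n))) (sq_integrable E hE n) a
  have h1 : (μ {ω | a ≤ (SS E n ω - mS μ E n)^2}).toReal ≤ V / a := by
    rw [le_div_iff₀ ha]
    calc (μ {ω | a ≤ (SS E n ω - mS μ E n)^2}).toReal * a
        = a * (μ {ω | a ≤ (SS E n ω - mS μ E n)^2}).toReal := by ring
      _ ≤ ∫ ω, (SS E n ω - mS μ E n)^2 ∂μ := hmark
      _ ≤ V := hV
  calc μ {ω | a ≤ (SS E n ω - mS μ E n)^2}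
      = ENNReal.ofReal ((μ {ω | a ≤ (SS E n ω - mS μ E n)^2}).toReal) :=
        (ENNReal.ofReal_toReal (measure_ne_top μ _)).symm
    _ ≤ ENNReal.ofReal (V / a) := ENNReal.ofReal_le_ofReal h1

end Stmt4Main

namespace Stmt4Main
open Stmt4Aux Stmt4Aux2 Stmt4Aux3

variable {Ω : Type*} [MeasurableSpace Ω] {μ : Measure Ω} [IsProbabilityMeasure μ]

set_option maxHeartbeats 2000000 in
lemma main_aux (E : ℕ → Set Ω) (hE : ∀ n, MeasurableSet (E n))
    (ρ : ℕ → ℝ) (hρ0 : ∀ n, 0 ≤ ρ n) (hρsum : Summable ρ)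
    (hcorr : ∀ i j, 1 ≤ i → 1 ≤ j → i ≠ j →
      (μ (E i ∩ E j)).toReal - (μ (E i)).toReal * (μ (E j)).toReal ≤
        ρ (Nat.dist i j) * Real.sqrt ((μ (E i)).toReal * (μ (E j)).toReal))
    (hdiv : Tendsto (fun n : ℕ => mS μ E n) atTop atTop) (j : ℕ) :
    ∀ᵐ ω ∂μ, ∀ᶠ n in atTop, |SS E n ω / mS μ E n - 1| < 1 / ((j:ℝ)+1) := by
  classical
  set ε : ℝ := 1 / ((j:ℝ)+1) with hεdef
  have hε : 0 < ε := by positivity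
  have hε1 : ε ≤ 1 := by
    rw [hεdef, div_le_one (by positivity)]
    have : (0:ℝ) ≤ (j:ℝ) := Nat.cast_nonneg j
    linarith
  set δ : ℝ := ε / 4 with hδdef
  have hδ : 0 < δ := by positivity
  set T : ℝ := ∑' d, ρ d with hTdef
  have hT0 : 0 ≤ T := tsum_nonneg hρ0
  set C : ℝ := 1 + 2 * T with hCdef
  have hC : 0 < C := by linarith
  clear_value ε δ
  -- basic facts
  have hp0 : ∀ k, (0:ℝ) ≤ (μ (E k)).toReal := fun k => ENNReal.toReal_nonneg
  have hp1 : ∀ k, (μ (E k)).toReal ≤ 1 := by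
    intro k
    have h := prob_le_one (μ := μ) (s := E k)
    have := ENNReal.toReal_mono (by simp) h
    simpa using this
  have hm_mono : Monotone (mS μ E) := by
    intro a b hab
    exact Finset.sum_le_sum_of_subset_of_nonneg
      (Finset.Icc_subset_Icc le_rfl hab) (fun k _ _ => hp0 k)
  have hS_mono : ∀ ω : Ω, Monotone (fun n => SS E n ω) := by
    intro ω a b hab
    exact Finset.sum_le_sum_of_subset_of_nonneg
      (Finset.Icc_subset_Icc le_rfl hab)
      (fun k _ _ => Set.indicator_nonneg (fun _ _ => zero_le_one) ω)
  have hm_le : ∀ n : ℕ, mS μ E n ≤ n := by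
    intro n
    calc mS μ E n ≤ ∑ k ∈ Icc 1 n, (1:ℝ) := Finset.sum_le_sum (fun k _ => hp1 k)
      _ = ((Icc 1 n).card : ℝ) := by rw [Finset.sum_const]; simp
      _ = n := by rw [Nat.card_Icc]; simp
  -- variance bound
  have hvar : ∀ n : ℕ, ∫ ω, (SS E n ω - mS μ E n)^2 ∂μ ≤ C * mS μ E n := by
    intro n
    have h := var_bound (μ := μ) E hE ρ hρ0 hρsum hcorr n
    have heq : ∀ ω : Ω, (SS E n ω - mS μ E n)^2
        = (∑ k ∈ Icc 1 n, ((E k).indicator (fun _ => (1:ℝ)) ω - (μ (E k)).toReal))^2 := by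
      intro ω; rw [sub_eq]
    calc ∫ ω, (SS E n ω - mS μ E n)^2 ∂μ
        = ∫ ω, (∑ k ∈ Icc 1 n, ((E k).indicator (fun _ => (1:ℝ)) ω - (μ (E k)).toReal))^2 ∂μ := by
          exact integral_congr_ae (ae_of_all μ heq)
      _ ≤ (1 + 2 * ∑' d, ρ d) * ∑ k ∈ Icc 1 n, (μ (E k)).toReal := h
      _ = C * mS μ E n := by rw [hCdef, hTdef, mS]
  -- the subsequence
  have hex : ∀ k : ℕ, ∃ n : ℕ, ((k:ℝ)+1)^2 ≤ mS μ E n := by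
    intro k
    exact (hdiv.eventually_ge_atTop (((k:ℝ)+1)^2)).exists
  set N : ℕ → ℕ := fun k => Nat.find (hex k) with hNdef
  have hNspec : ∀ k : ℕ, ((k:ℝ)+1)^2 ≤ mS μ E (N k) := fun k => Nat.find_spec (hex k)
  have hNmin : ∀ k n', n' < N k → mS μ E n' < ((k:ℝ)+1)^2 :=
    fun k n' h => lt_of_not_ge (Nat.find_min (hex k) h)
  have hmS0 : mS μ E 0 = 0 := by simp [mS]
  have hN1 : ∀ k, 1 ≤ N k := by
    intro k
    by_contra h
    have h0 : N k = 0 := by omega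
    have := hNspec k
    rw [h0, hmS0] at this
    nlinarith [Nat.cast_nonneg (α := ℝ) k]
  have hNup : ∀ k, mS μ E (N k) ≤ ((k:ℝ)+1)^2 + 1 := by
    intro k
    obtain ⟨l, hl⟩ : ∃ l, N k = l + 1 := ⟨N k - 1, by have := hN1 k; omega⟩
    have h1 : mS μ E l < ((k:ℝ)+1)^2 := hNmin k l (by omega)
    have h2 : mS μ E (l+1) = mS μ E l + (μ (E (l+1))).toReal := by
      rw [mS, mS, Finset.sum_Icc_succ_top (by omega : 1 ≤ l + 1)]
    rw [hl, h2]
    have := hp1 (l+1)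
    linarith
  have hNge : ∀ k, k + 1 ≤ N k := by
    intro k
    have h1 : ((k:ℝ)+1)^2 ≤ (N k : ℝ) := (hNspec k).trans (hm_le (N k))
    have h2 : ((k:ℝ)+1) ≤ ((k:ℝ)+1)^2 := by nlinarith [Nat.cast_nonneg (α := ℝ) k]
    have : ((k:ℝ)+1) ≤ (N k : ℝ) := h2.trans h1
    exact_mod_cast (by push_cast; linarith : ((k+1 : ℕ) : ℝ) ≤ (N k : ℝ))
  have hmNpos : ∀ k, 0 < mS μ E (N k) := by
    intro k
    have := hNspec k
    nlinarith [Nat.cast_nonneg (α := ℝ) k]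
  clear_value N
  -- Chebyshev + Borel–Cantelli
  set A : ℕ → Set Ω := fun k => {ω | (δ * mS μ E (N k))^2 ≤ (SS E (N k) ω - mS μ E (N k))^2}
    with hAdef
  have hμA : ∀ k, μ (A k) ≤ ENNReal.ofReal (C / δ^2 * (1 / ((k:ℝ)+1)^2)) := by
    intro k
    have ha : (0:ℝ) < (δ * mS μ E (N k))^2 := pow_pos (mul_pos hδ (hmNpos k)) 2
    have h := cheb (μ := μ) E hE (N k) ((δ * mS μ E (N k))^2) (C * mS μ E (N k)) ha
      (hvar (N k))
    refine h.trans (ENNReal.ofReal_le_ofReal ?_)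
    have hmpos := hmNpos k
    have heq : C * mS μ E (N k) / (δ * mS μ E (N k))^2 = C / δ^2 * (1 / mS μ E (N k)) := by
      field_simp
    rw [heq]
    have h2 : 1 / mS μ E (N k) ≤ 1 / ((k:ℝ)+1)^2 := by
      apply one_div_le_one_div_of_le
      · positivity
      · exact hNspec k
    apply mul_le_mul_of_nonneg_left h2 (by positivity)
  have hsummable : Summable (fun k : ℕ => C / δ^2 * (1 / ((k:ℝ)+1)^2)) := by
    apply Summable.mul_left
    have h := (summable_nat_add_iff 1).2 (Real.summable_one_div_nat_pow.2 (by norm_num : 1 < 2))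
    convert h using 2 with k
    · rfl
    · simp
  have hsum_ne_top : (∑' k, μ (A k)) ≠ ⊤ := by
    have h1 : (∑' k, μ (A k)) ≤ ∑' k : ℕ, ENNReal.ofReal (C / δ^2 * (1 / ((k:ℝ)+1)^2)) :=
      ENNReal.tsum_le_tsum hμA
    have h2 : (∑' k : ℕ, ENNReal.ofReal (C / δ^2 * (1 / ((k:ℝ)+1)^2)))
        = ENNReal.ofReal (∑' k : ℕ, C / δ^2 * (1 / ((k:ℝ)+1)^2)) :=
      (ENNReal.ofReal_tsum_of_nonneg (fun k => by positivity) hsummable).symm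
    rw [h2] at h1
    exact ne_top_of_le_ne_top ENNReal.ofReal_ne_top h1
  have hBC := ae_eventually_notMem hsum_ne_top
  -- ratio bound
  have hratio : ∀ k : ℕ, 4 / δ ≤ (k:ℝ) → mS μ E (N (k+1)) ≤ (1+δ) * mS μ E (N k) := by
    intro k hk
    have h1 : mS μ E (N (k+1)) ≤ ((k:ℝ)+2)^2 + 1 := by
      have := hNup (k+1)
      push_cast at this
      linarith
    have h2 : ((k:ℝ)+1)^2 ≤ mS μ E (N k) := hNspec k
    have hk4 : 4 ≤ δ * (k:ℝ) := by
      rw [div_le_iff₀ hδ] at hk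
      linarith
    have hknn : (0:ℝ) ≤ (k:ℝ) := Nat.cast_nonneg k
    have h3 : ((k:ℝ)+2)^2 + 1 ≤ (1+δ) * ((k:ℝ)+1)^2 := by
      nlinarith [mul_le_mul_of_nonneg_right hk4 hknn]
    calc mS μ E (N (k+1)) ≤ ((k:ℝ)+2)^2 + 1 := h1
      _ ≤ (1+δ) * ((k:ℝ)+1)^2 := h3
      _ ≤ (1+δ) * mS μ E (N k) := by nlinarith [h2]
  -- conclude
  filter_upwards [hBC] with ω hω
  obtain ⟨K₁, hK₁⟩ := eventually_atTop.1 hω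
  set K : ℕ := max K₁ ⌈4/δ⌉₊ with hKdef
  refine eventually_atTop.2 ⟨N (K+1), fun n hn => ?_⟩
  have hKn : K + 1 ≤ n := le_trans (by have := hNge (K+1); omega) hn
  set P : ℕ → Prop := fun k => N k ≤ n with hPdef
  have hPdec : DecidablePred P := fun k => Nat.decLe _ _
  set k : ℕ := Nat.findGreatest P n with hkdef
  have hkK : K + 1 ≤ k := Nat.le_findGreatest hKn hn
  have hNkn : N k ≤ n := Nat.findGreatest_spec (P := P) hKn hn
  have hnk1 : n < N (k+1) := by
    by_cases h : k + 1 ≤ n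
    · have h2 := Nat.findGreatest_is_greatest (P := P) (n := n) (k := k+1) (by omega) h
      rw [hPdef] at h2
      omega
    · have := hNge (k+1)
      omega
  clear_value P k
  -- bounds at the subsequence points
  clear_value A
  have hωk : ∀ i, K₁ ≤ i → (SS E (N i) ω - mS μ E (N i))^2 < (δ * mS μ E (N i))^2 := by
    intro i hi
    have := hK₁ i hi
    rw [hAdef] at this
    simp only [Set.mem_setOf_eq] at this
    exact lt_of_not_ge this
  have hkK₁ : K₁ ≤ k := by omega
  have hk1K₁ : K₁ ≤ k + 1 := by omega
  have hsq_k := hωk k hkK₁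
  have hsq_k1 := hωk (k+1) hk1K₁
  have hmk := hmNpos k
  have hmk1 := hmNpos (k+1)
  have habs_k := abs_lt_of_sq_lt_sq' hsq_k (by positivity)
  have habs_k1 := abs_lt_of_sq_lt_sq' hsq_k1 (by positivity)
  have hlo_k : (1-δ) * mS μ E (N k) < SS E (N k) ω := by
    have := habs_k.1
    linarith
  have hup_k1 : SS E (N (k+1)) ω < (1+δ) * mS μ E (N (k+1)) := by
    have := habs_k1.2
    linarith
  have hrk : (4:ℝ)/δ ≤ (k:ℝ) := by
    have h1 : (⌈4/δ⌉₊ : ℝ) ≤ (k:ℝ) := by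
      have : ⌈4/δ⌉₊ ≤ k := by omega
      exact_mod_cast this
    exact (Nat.le_ceil _).trans h1
  have hr := hratio k hrk
  have hmono1 : mS μ E (N k) ≤ mS μ E n := hm_mono hNkn
  have hmono2 : mS μ E n ≤ mS μ E (N (k+1)) := hm_mono (le_of_lt hnk1)
  have hSn1 : SS E n ω ≤ SS E (N (k+1)) ω := hS_mono ω (le_of_lt hnk1)
  have hSn2 : SS E (N k) ω ≤ SS E n ω := hS_mono ω hNkn
  have hmn_pos : 0 < mS μ E n := lt_of_lt_of_le hmk hmono1
  have hupper : SS E n ω < (1+ε) * mS μ E n := by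
    have h1 : SS E n ω < (1+δ) * mS μ E (N (k+1)) := lt_of_le_of_lt hSn1 hup_k1
    have h2 : (1+δ) * mS μ E (N (k+1)) ≤ (1+δ) * ((1+δ) * mS μ E (N k)) :=
      mul_le_mul_of_nonneg_left hr (by linarith)
    have h3 : (1+δ) * ((1+δ) * mS μ E (N k)) ≤ (1+δ)^2 * mS μ E n := by
      calc (1+δ) * ((1+δ) * mS μ E (N k)) = (1+δ)^2 * mS μ E (N k) := by ring
        _ ≤ (1+δ)^2 * mS μ E n := mul_le_mul_of_nonneg_left hmono1 (sq_nonneg _)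
    have h4 : (1+δ)^2 * mS μ E n < (1+ε) * mS μ E n := by
      have hδε : (1+δ)^2 < 1+ε := by
        rw [hδdef]
        nlinarith [hε, hε1]
      exact mul_lt_mul_of_pos_right hδε hmn_pos
    linarith
  have hlower : (1-ε) * mS μ E n < SS E n ω := by
    have h0 : (0:ℝ) ≤ 1 - ε := by linarith
    have h1 : (1-ε) * mS μ E n ≤ (1-ε) * mS μ E (N (k+1)) :=
      mul_le_mul_of_nonneg_left hmono2 h0
    have h2 : (1-ε) * mS μ E (N (k+1)) ≤ (1-ε) * ((1+δ) * mS μ E (N k)) :=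
      mul_le_mul_of_nonneg_left hr h0
    have h3 : (1-ε) * ((1+δ) * mS μ E (N k)) < (1-δ) * mS μ E (N k) := by
      have hc : (1-ε)*(1+δ) < 1-δ := by
        rw [hδdef]
        nlinarith [hε, hε1]
      calc (1-ε) * ((1+δ) * mS μ E (N k)) = ((1-ε)*(1+δ)) * mS μ E (N k) := by ring
        _ < (1-δ) * mS μ E (N k) := mul_lt_mul_of_pos_right hc hmk
    linarith
  rw [abs_lt]
  constructor
  · have h := (lt_div_iff₀ hmn_pos).2 hlower
    linarith
  · have h := (div_lt_iff₀ hmn_pos).2 hupper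
    linarith

end Stmt4Main

theorem stmt4 {Ω : Type*} [MeasurableSpace Ω] (μ : Measure Ω) [IsProbabilityMeasure μ]
    (E : ℕ → Set Ω) (hE : ∀ n, MeasurableSet (E n))
    (ρ : ℕ → ℝ) (hρ0 : ∀ n, 0 ≤ ρ n) (hρsum : Summable ρ)
    (hcorr : ∀ i j, 1 ≤ i → 1 ≤ j → i ≠ j →
      (μ (E i ∩ E j)).toReal - (μ (E i)).toReal * (μ (E j)).toReal ≤
        ρ (Nat.dist i j) * Real.sqrt ((μ (E i)).toReal * (μ (E j)).toReal))
    (hdiv : Tendsto (fun n : ℕ => ∑ k ∈ Finset.Icc 1 n, (μ (E k)).toReal) atTop atTop) :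
    ∀ᵐ ω ∂μ,
      Tendsto
        (fun n : ℕ =>
          (∑ k ∈ Finset.Icc 1 n, (E k).indicator (fun _ => (1 : ℝ)) ω) /
            (∑ k ∈ Finset.Icc 1 n, (μ (E k)).toReal))
        atTop (nhds 1) := by
  have hdiv' : Tendsto (fun n : ℕ => Stmt4Main.mS μ E n) atTop atTop := hdiv
  have H : ∀ j : ℕ, ∀ᵐ ω ∂μ, ∀ᶠ n in atTop,
      |Stmt4Main.SS E n ω / Stmt4Main.mS μ E n - 1| < 1 / ((j:ℝ)+1) :=
    fun j => Stmt4Main.main_aux E hE ρ hρ0 hρsum hcorr hdiv' j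
  have H' := ae_all_iff.2 H
  filter_upwards [H'] with ω hω
  have hgoal : Tendsto (fun n : ℕ => Stmt4Main.SS E n ω / Stmt4Main.mS μ E n)
      atTop (nhds 1) := by
    rw [Metric.tendsto_atTop]
    intro ε' hε'
    obtain ⟨j, hj⟩ := exists_nat_one_div_lt hε'
    obtain ⟨Nn, hNn⟩ := eventually_atTop.1 (hω j)
    refine ⟨Nn, fun n hn => ?_⟩
    rw [Real.dist_eq]
    exact lt_trans (hNn n hn) hj
  exact hgoal
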